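/- Let θ_1 > θ_2 > … > θ_I > 0, N_1, …, N_I > 0 be integers, S > 0, let λ* be the CP water level and K = #{i : θ_i > λ*}. Then for every choice of integers n_i ∈ {0, 1, …, N_i} and prices p_i > 0 (i = 1,…,I) such that the induced demands s_i = (θ_i/p_i − 1)^+ satisfy ∑_{i=1}^I n_i·s_i ≤ S, the revenue satisfies ∑_{i=1}^I n_i·p_i·s_i ≤ ∑_{i=1}^K N_i·(θ_i − √(θ_i·λ*)). Moreover this bound is attained by taking n_i = N_i for all i, p_i = √(θ_i·λ*) for i ≤ K, and p_i = θ_i for i > K. -/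

import Mathlib

lemma cp_key (θ lam p : ℝ) (hθ : 0 < θ) (hlam : 0 < lam) (hp : 0 < p) :
    p * max (θ / p - 1) 0 ≤
      lam * max (θ / p - 1) 0 +
        (max (θ - Real.sqrt (θ * lam)) 0 - max (Real.sqrt (θ * lam) - lam) 0) := by
  have ha2 : Real.sqrt θ * Real.sqrt θ = θ := Real.mul_self_sqrt hθ.le
  have hb2 : Real.sqrt lam * Real.sqrt lam = lam := Real.mul_self_sqrt hlam.le
  have ha0 : 0 < Real.sqrt θ := Real.sqrt_pos.mpr hθ
  have hb0 : 0 < Real.sqrt lam := Real.sqrt_pos.mpr hlam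
  have hq : Real.sqrt (θ * lam) = Real.sqrt θ * Real.sqrt lam := Real.sqrt_mul hθ.le lam
  set a := Real.sqrt θ
  set b := Real.sqrt lam
  rw [hq]
  rcases le_or_gt lam θ with hcase | hcase
  · have hba : b ≤ a := by nlinarith
    have h1 : max (θ - a * b) 0 = θ - a * b := max_eq_left (by nlinarith)
    have h2 : max (a * b - lam) 0 = a * b - lam := max_eq_left (by nlinarith)
    rw [h1, h2]
    rcases le_or_gt θ p with h | h
    · have h3 : max (θ / p - 1) 0 = 0 := max_eq_right (by
        rw [sub_nonpos, div_le_one hp]; exact h)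
      rw [h3, mul_zero, mul_zero]
      nlinarith [sq_nonneg (a - b)]
    · have h3 : max (θ / p - 1) 0 = θ / p - 1 := max_eq_left (by
        rw [sub_nonneg, le_div_iff₀ hp, one_mul]; exact h.le)
      rw [h3]
      rw [div_sub_one hp.ne', mul_comm p ((θ - p) / p), div_mul_cancel₀ _ hp.ne',
        ← sub_nonneg]
      have hrw : lam * ((θ - p) / p) + (θ - a * b - (a * b - lam)) - (θ - p)
          = (lam * (θ - p) + (θ - a * b - (a * b - lam)) * p - (θ - p) * p) / p := by
        field_simp
      rw [hrw]
      apply div_nonneg _ hp.le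
      nlinarith [sq_nonneg (p - a * b)]
  · have hab : a ≤ b := by nlinarith
    have h1 : max (θ - a * b) 0 = 0 := max_eq_right (by nlinarith)
    have h2 : max (a * b - lam) 0 = 0 := max_eq_right (by nlinarith)
    rw [h1, h2, sub_zero, add_zero]
    rcases le_or_gt θ p with h | h
    · have h3 : max (θ / p - 1) 0 = 0 := max_eq_right (by
        rw [sub_nonpos, div_le_one hp]; exact h)
      rw [h3, mul_zero, mul_zero]
    · have hplam : p ≤ lam := le_of_lt (lt_of_lt_of_le h hcase.le)
      exact mul_le_mul_of_nonneg_right hplam (le_max_right _ _)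
lemma cp_E_nonneg (θ lam : ℝ) (hθ : 0 < θ) (hlam : 0 < lam) :
    0 ≤ max (θ - Real.sqrt (θ * lam)) 0 - max (Real.sqrt (θ * lam) - lam) 0 := by
  have ha2 : Real.sqrt θ * Real.sqrt θ = θ := Real.mul_self_sqrt hθ.le
  have hb2 : Real.sqrt lam * Real.sqrt lam = lam := Real.mul_self_sqrt hlam.le
  have ha0 : 0 < Real.sqrt θ := Real.sqrt_pos.mpr hθ
  have hb0 : 0 < Real.sqrt lam := Real.sqrt_pos.mpr hlam
  have hq : Real.sqrt (θ * lam) = Real.sqrt θ * Real.sqrt lam := Real.sqrt_mul hθ.le lam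
  set a := Real.sqrt θ
  set b := Real.sqrt lam
  rw [hq]
  rcases le_total a b with h | h
  · rw [show max (a * b - lam) 0 = 0 from max_eq_right (by nlinarith), sub_zero]
    exact le_max_right _ _
  · rw [max_eq_left (by nlinarith), max_eq_left (by nlinarith)]
    nlinarith [sq_nonneg (a - b)]

lemma cp_helper1 (θ lam : ℝ) (hθ : 0 < θ) (hlam : 0 < lam) :
    lam * max (Real.sqrt (θ / lam) - 1) 0 = max (Real.sqrt (θ * lam) - lam) 0 := by
  have hb2 : Real.sqrt lam * Real.sqrt lam = lam := Real.mul_self_sqrt hlam.le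
  have hb0 : 0 < Real.sqrt lam := Real.sqrt_pos.mpr hlam
  have key : lam * (Real.sqrt (θ / lam) - 1) = Real.sqrt (θ * lam) - lam := by
    have hq : Real.sqrt (θ * lam) = Real.sqrt θ * Real.sqrt lam := Real.sqrt_mul hθ.le lam
    rw [Real.sqrt_div hθ.le, hq]
    field_simp
    nlinarith [Real.sqrt_nonneg θ]
  rcases le_total (Real.sqrt (θ / lam)) 1 with h | h
  · rw [max_eq_right (by linarith), mul_zero, max_eq_right (by nlinarith)]
  · rw [max_eq_left (by linarith), max_eq_left (by nlinarith), key]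

lemma cp_helper2 (θ lam : ℝ) (hθ : 0 < θ) (hlam : 0 < lam) :
    max (θ - Real.sqrt (θ * lam)) 0 = if lam < θ then θ - Real.sqrt (θ * lam) else 0 := by
  split_ifs with h
  · refine max_eq_left (sub_nonneg.mpr ?_)
    calc Real.sqrt (θ * lam) ≤ Real.sqrt (θ * θ) := Real.sqrt_le_sqrt (by nlinarith)
      _ = θ := Real.sqrt_mul_self hθ.le
  · refine max_eq_right (sub_nonpos.mpr ?_)
    push_neg at h
    calc θ = Real.sqrt (θ * θ) := (Real.sqrt_mul_self hθ.le).symm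
      _ ≤ Real.sqrt (θ * lam) := Real.sqrt_le_sqrt (by nlinarith)

lemma cp_helper3 (θ lam : ℝ) (hθ : 0 < θ) (hlam : 0 < lam) :
    max (θ / (if lam < θ then Real.sqrt (θ * lam) else θ) - 1) 0
      = max (Real.sqrt (θ / lam) - 1) 0 := by
  split_ifs with h
  · have key : θ / Real.sqrt (θ * lam) = Real.sqrt (θ / lam) := by
      have ha2 : Real.sqrt θ * Real.sqrt θ = θ := Real.mul_self_sqrt hθ.le
      have ha0 : 0 < Real.sqrt θ := Real.sqrt_pos.mpr hθ
      have hb0 : 0 < Real.sqrt lam := Real.sqrt_pos.mpr hlam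
      rw [Real.sqrt_div hθ.le, Real.sqrt_mul hθ.le, eq_div_iff hb0.ne']
      field_simp
      nlinarith
    rw [key]
  · push_neg at h
    rw [div_self hθ.ne', sub_self]
    have h1 : Real.sqrt (θ / lam) ≤ 1 := Real.sqrt_le_one.mpr ((div_le_one hlam).mpr h)
    rw [max_self, max_eq_right (sub_nonpos.mpr h1)]

lemma cp_helper4 (θ lam : ℝ) (hθ : 0 < θ) (hlam : 0 < lam) :
    (if lam < θ then Real.sqrt (θ * lam) else θ) *
        max (θ / (if lam < θ then Real.sqrt (θ * lam) else θ) - 1) 0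
      = if lam < θ then θ - Real.sqrt (θ * lam) else 0 := by
  split_ifs with h
  · have hq0 : 0 < Real.sqrt (θ * lam) := Real.sqrt_pos.mpr (by positivity)
    have hqθ : Real.sqrt (θ * lam) < θ := by
      calc Real.sqrt (θ * lam) < Real.sqrt (θ * θ) :=
            Real.sqrt_lt_sqrt (by positivity) (by nlinarith)
        _ = θ := Real.sqrt_mul_self hθ.le
    have hmax : max (θ / Real.sqrt (θ * lam) - 1) 0 = θ / Real.sqrt (θ * lam) - 1 :=
      max_eq_left (by rw [sub_nonneg, le_div_iff₀ hq0, one_mul]; exact hqθ.le)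
    rw [hmax, mul_sub, mul_one, mul_div_cancel₀ _ hq0.ne']
  · rw [div_self hθ.ne', sub_self, max_self, mul_zero]

/-- Optimality of the complete price differentiation (CP) scheme: for any feasible
admission numbers n_i ≤ N_i and prices p_i > 0 with induced demands
s_i = (θ_i/p_i − 1)⁺ satisfying ∑ n_i s_i ≤ S, the revenue ∑ n_i p_i s_i is at
most ∑_{i : θ_i > λ*} N_i (θ_i − √(θ_i λ*)), where λ* is the CP water level;
moreover this bound is attained by admitting everyone and charging
p_i = √(θ_i λ*) to effective groups and p_i = θ_i to the rest.
Groups are indexed 0, …, I−1. -/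
theorem cp_scheme_optimal (I : ℕ) (hI : 1 ≤ I) (θ : ℕ → ℝ) (N : ℕ → ℕ)
    (hθpos : ∀ i < I, 0 < θ i)
    (hθanti : ∀ i j, i < j → j < I → θ j < θ i)
    (hN : ∀ i < I, 0 < N i)
    (S : ℝ) (hS : 0 < S)
    (lam : ℝ) (hlam : 0 < lam)
    (hwf : ∑ i ∈ Finset.range I, (N i : ℝ) * max (Real.sqrt (θ i / lam) - 1) 0 = S) :
    (∀ (n : ℕ → ℕ) (p : ℕ → ℝ),
      (∀ i < I, n i ≤ N i) → (∀ i < I, 0 < p i) →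
      (∑ i ∈ Finset.range I, (n i : ℝ) * max (θ i / p i - 1) 0 ≤ S) →
      ∑ i ∈ Finset.range I, (n i : ℝ) * (p i * max (θ i / p i - 1) 0) ≤
        ∑ i ∈ (Finset.range I).filter (fun i => lam < θ i),
          (N i : ℝ) * (θ i - Real.sqrt (θ i * lam))) ∧
    ((∑ i ∈ Finset.range I,
        (N i : ℝ) * max (θ i / (if lam < θ i then Real.sqrt (θ i * lam) else θ i) - 1) 0 ≤ S) ∧
      ∑ i ∈ Finset.range I,
        (N i : ℝ) * ((if lam < θ i then Real.sqrt (θ i * lam) else θ i) *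
          max (θ i / (if lam < θ i then Real.sqrt (θ i * lam) else θ i) - 1) 0) =
        ∑ i ∈ (Finset.range I).filter (fun i => lam < θ i),
          (N i : ℝ) * (θ i - Real.sqrt (θ i * lam))) := by
  have hfinal : ∑ i ∈ Finset.range I, (N i : ℝ) * max (θ i - Real.sqrt (θ i * lam)) 0
      = ∑ i ∈ (Finset.range I).filter (fun i => lam < θ i),
          (N i : ℝ) * (θ i - Real.sqrt (θ i * lam)) := by
    rw [Finset.sum_filter]
    refine Finset.sum_congr rfl fun i hi => ?_
    have hθi := hθpos i (Finset.mem_range.mp hi)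
    rw [cp_helper2 (θ i) lam hθi hlam, mul_ite, mul_zero]
  refine ⟨?_, ?_, ?_⟩
  · intro n p hn hp hfeas
    calc ∑ i ∈ Finset.range I, (n i : ℝ) * (p i * max (θ i / p i - 1) 0)
        ≤ ∑ i ∈ Finset.range I, (lam * ((n i : ℝ) * max (θ i / p i - 1) 0)
            + (N i : ℝ) * (max (θ i - Real.sqrt (θ i * lam)) 0
                - max (Real.sqrt (θ i * lam) - lam) 0)) := by
          refine Finset.sum_le_sum fun i hi => ?_
          have hiI := Finset.mem_range.mp hi
          have hθi := hθpos i hiI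
          have hkey := cp_key (θ i) lam (p i) hθi hlam (hp i hiI)
          have hE := cp_E_nonneg (θ i) lam hθi hlam
          have h1 : (n i : ℝ) * (p i * max (θ i / p i - 1) 0)
              ≤ (n i : ℝ) * (lam * max (θ i / p i - 1) 0
                + (max (θ i - Real.sqrt (θ i * lam)) 0
                    - max (Real.sqrt (θ i * lam) - lam) 0)) :=
            mul_le_mul_of_nonneg_left hkey (Nat.cast_nonneg _)
          have h2 : (n i : ℝ) ≤ (N i : ℝ) := Nat.cast_le.mpr (hn i hiI)
          nlinarith [hE, show (0:ℝ) ≤ (n i : ℝ) from Nat.cast_nonneg _]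
      _ = lam * ∑ i ∈ Finset.range I, (n i : ℝ) * max (θ i / p i - 1) 0
            + ∑ i ∈ Finset.range I, (N i : ℝ) * (max (θ i - Real.sqrt (θ i * lam)) 0
                - max (Real.sqrt (θ i * lam) - lam) 0) := by
          rw [Finset.sum_add_distrib, Finset.mul_sum]
      _ ≤ lam * S
            + ∑ i ∈ Finset.range I, (N i : ℝ) * (max (θ i - Real.sqrt (θ i * lam)) 0
                - max (Real.sqrt (θ i * lam) - lam) 0) := by
          exact add_le_add_left (mul_le_mul_of_nonneg_left hfeas hlam.le) _
      _ = ∑ i ∈ Finset.range I, ((N i : ℝ) * max (Real.sqrt (θ i * lam) - lam) 0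
            + (N i : ℝ) * (max (θ i - Real.sqrt (θ i * lam)) 0
                - max (Real.sqrt (θ i * lam) - lam) 0)) := by
          rw [Finset.sum_add_distrib]
          congr 1
          rw [← hwf, Finset.mul_sum]
          refine Finset.sum_congr rfl fun i hi => ?_
          have hθi := hθpos i (Finset.mem_range.mp hi)
          rw [← cp_helper1 (θ i) lam hθi hlam]
          ring
      _ = ∑ i ∈ Finset.range I, (N i : ℝ) * max (θ i - Real.sqrt (θ i * lam)) 0 := by
          refine Finset.sum_congr rfl fun i hi => ?_
          ring
      _ = _ := hfinal
  · refine le_of_eq ?_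
    rw [← hwf]
    refine Finset.sum_congr rfl fun i hi => ?_
    have hθi := hθpos i (Finset.mem_range.mp hi)
    rw [cp_helper3 (θ i) lam hθi hlam]
  · rw [Finset.sum_filter]
    refine Finset.sum_congr rfl fun i hi => ?_
    have hθi := hθpos i (Finset.mem_range.mp hi)
    rw [cp_helper4 (θ i) lam hθi hlam, mul_ite, mul_zero]
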